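/- Let N ≥ 1 and let |ψ⟩ be any unit vector in the Hilbert space ℂ^(2^N) of an N-qubit register. Then there exist N linear subspaces S_1, …, S_N of ℂ^(2^N), each of (complex) dimension 2^(N−1), such that the intersection ⋂_{k=1}^N S_k equals the one-dimensional span of |ψ⟩. -/

import Mathlib

open Submodule Module

/-- **Splitting subspaces** (Lemma 3.1): any unit vector `ψ` in the Hilbert space
`ℂ^(2^N)` of an `N`-qubit register (`N ≥ 1`) is the unique unit-norm vector in the
intersection of `N` subspaces of dimension `2^(N-1)`. -/
theorem splitting_subspaces (N : ℕ) (hN : 1 ≤ N)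
    (ψ : EuclideanSpace ℂ (Fin (2 ^ N))) (hψ : ‖ψ‖ = 1) :
    ∃ S : Fin N → Submodule ℂ (EuclideanSpace ℂ (Fin (2 ^ N))),
      (∀ k, Module.finrank ℂ (S k) = 2 ^ (N - 1)) ∧
      (⨅ k, S k) = Submodule.span ℂ {ψ} := by
  classical
  have hψ0 : ψ ≠ 0 := by
    intro h; rw [h, norm_zero] at hψ; norm_num at hψ
  have hli : LinearIndependent ℂ
      ((↑) : ({ψ} : Set (EuclideanSpace ℂ (Fin (2 ^ N)))) → EuclideanSpace ℂ (Fin (2 ^ N))) :=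
    (linearIndepOn_singleton_iff (R := ℂ) (v := id)).mpr hψ0
  set t := LinearIndepOn.extend (v := id) (s := {ψ}) hli (Set.subset_univ _) with ht
  set B : Basis t ℂ (EuclideanSpace ℂ (Fin (2 ^ N))) := Basis.extend hli with hB
  haveI : Fintype t := FiniteDimensional.fintypeBasisIndex B
  have hψt : ψ ∈ t := LinearIndepOn.subset_extend (v := id) (s := {ψ}) hli _ rfl
  have hcardt : Fintype.card t = 2 ^ N := by
    have h1 := Module.finrank_eq_card_basis B
    rw [finrank_euclideanSpace, Fintype.card_fin] at h1
    omega
  have hcardι : Fintype.card (Fin N → Bool) = 2 ^ N := by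
    simp [Fintype.card_fun]
  set z0 : Fin N → Bool := fun _ => false with hz0
  set e : (Fin N → Bool) ≃ t :=
    Equiv.setValue (Fintype.equivOfCardEq (hcardι.trans hcardt.symm)) z0 ⟨ψ, hψt⟩ with he
  set b : Basis (Fin N → Bool) ℂ (EuclideanSpace ℂ (Fin (2 ^ N))) := B.reindex e.symm with hb
  have hb0 : b z0 = ψ := by
    rw [hb, Basis.reindex_apply, Equiv.symm_symm, he, Equiv.setValue_eq, hB,
      Basis.extend_apply_self hli]
  set E := b.equivFun with hE
  set T : Fin N → Submodule ℂ ((Fin N → Bool) → ℂ) := fun k =>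
    LinearMap.ker (LinearMap.funLeft ℂ ℂ ((↑) : {f : Fin N → Bool // f k = true} → (Fin N → Bool)))
    with hT
  have hmemT : ∀ (k : Fin N) (x : (Fin N → Bool) → ℂ),
      x ∈ T k ↔ ∀ f : Fin N → Bool, f k = true → x f = 0 := by
    intro k x
    rw [hT, LinearMap.mem_ker]
    constructor
    · intro h f hf
      have := congrFun h ⟨f, hf⟩
      simpa [LinearMap.funLeft_apply] using this
    · intro h
      funext g
      simpa [LinearMap.funLeft_apply] using h g.1 g.2
  -- cardinality of the killed coordinate sets
  have hcardk : ∀ k : Fin N,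
      Fintype.card {f : Fin N → Bool // f k = true} = 2 ^ (N - 1) := by
    intro k
    have eq1 : {f : Fin N → Bool // f k = true} ≃ ({j : Fin N // j ≠ k} → Bool) :=
      { toFun := fun g j => g.1 j.1
        invFun := fun h => ⟨fun j => if hj : j = k then true else h ⟨j, hj⟩, by simp⟩
        left_inv := fun g => by
          ext j
          by_cases hj : j = k
          · subst hj; simp [g.2]
          · simp [hj]
        right_inv := fun h => by
          ext j
          simp [j.2] }
    have h1 : Fintype.card {j : Fin N // j ≠ k} = N - 1 := by
      have := Fintype.card_subtype_compl (fun j : Fin N => j = k)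
      simpa [Fintype.card_subtype_eq, Fintype.card_fin] using this
    rw [Fintype.card_congr eq1, Fintype.card_fun, h1, Fintype.card_bool]
  have hN' : N - 1 + 1 = N := Nat.succ_pred_eq_of_pos hN
  have hpow : 2 ^ N = 2 ^ (N - 1) + 2 ^ (N - 1) := by
    conv_lhs => rw [← hN', pow_succ]
    omega
  -- dimension of `T k`
  have hfinT : ∀ k : Fin N, Module.finrank ℂ (T k) = 2 ^ (N - 1) := by
    intro k
    have hsurj : Function.Surjective
        (LinearMap.funLeft ℂ ℂ ((↑) : {f : Fin N → Bool // f k = true} → (Fin N → Bool))) :=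
      LinearMap.funLeft_surjective_of_injective ℂ ℂ _ Subtype.val_injective
    have hrank := LinearMap.finrank_range_add_finrank_ker
      (LinearMap.funLeft ℂ ℂ ((↑) : {f : Fin N → Bool // f k = true} → (Fin N → Bool)))
    rw [LinearMap.range_eq_top.mpr hsurj, finrank_top] at hrank
    have h1 : Module.finrank ℂ ({f : Fin N → Bool // f k = true} → ℂ) = 2 ^ (N - 1) := by
      rw [Module.finrank_pi, hcardk k]
    have h2 : Module.finrank ℂ ((Fin N → Bool) → ℂ) = 2 ^ N := by
      rw [Module.finrank_pi, hcardι]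
    rw [h1, h2] at hrank
    show Module.finrank ℂ (LinearMap.ker (LinearMap.funLeft ℂ ℂ
      ((↑) : {f : Fin N → Bool // f k = true} → (Fin N → Bool)))) = 2 ^ (N - 1)
    rw [hpow] at hrank
    exact Nat.add_left_cancel hrank
  -- the intersection of the `T k` in coordinates
  have hsingle : ∀ k : Fin N, (Pi.single z0 (1 : ℂ) : (Fin N → Bool) → ℂ) ∈ T k := by
    intro k
    rw [hmemT]
    intro f hf
    apply Pi.single_eq_of_ne
    intro hfz
    rw [hfz] at hf
    simp [hz0] at hf
  have hiInfT : (⨅ k, T k) = Submodule.span ℂ {Pi.single z0 (1 : ℂ)} := by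
    apply le_antisymm
    · intro x hx
      rw [Submodule.mem_iInf] at hx
      have hx0 : ∀ f : Fin N → Bool, f ≠ z0 → x f = 0 := by
        intro f hf
        obtain ⟨k, hk⟩ : ∃ k, f k ≠ false := by
          by_contra h
          push_neg at h
          exact hf (funext h)
        exact (hmemT k x).mp (hx k) f (Bool.ne_false_iff.mp hk)
      have hxx : x = x z0 • (Pi.single z0 (1 : ℂ) : (Fin N → Bool) → ℂ) := by
        funext f
        by_cases hf : f = z0
        · subst hf; simp
        · rw [Pi.smul_apply, hx0 f hf, Pi.single_eq_of_ne hf]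
          simp
      rw [hxx]
      exact Submodule.smul_mem _ _ (Submodule.mem_span_singleton_self _)
    · rw [Submodule.span_le, Set.singleton_subset_iff, SetLike.mem_coe, Submodule.mem_iInf]
      exact hsingle
  have hEψ : E ψ = Pi.single z0 (1 : ℂ) := by
    rw [hE, ← hb0]
    funext j
    rw [Basis.equivFun_self, Pi.single_apply]
    simp [eq_comm]
  have hmc : ∀ p : Submodule ℂ ((Fin N → Bool) → ℂ),
      p.map (E.symm : ((Fin N → Bool) → ℂ) →ₗ[ℂ] EuclideanSpace ℂ (Fin (2 ^ N)))
        = p.comap (E : EuclideanSpace ℂ (Fin (2 ^ N)) →ₗ[ℂ] ((Fin N → Bool) → ℂ)) := by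
    intro p
    rw [Submodule.map_equiv_eq_comap_symm, LinearEquiv.symm_symm]
  refine ⟨fun k => (T k).map
    (E.symm : ((Fin N → Bool) → ℂ) →ₗ[ℂ] EuclideanSpace ℂ (Fin (2 ^ N))), ?_, ?_⟩
  · intro k
    rw [LinearEquiv.finrank_map_eq]
    exact hfinT k
  · calc (⨅ k, (T k).map
        (E.symm : ((Fin N → Bool) → ℂ) →ₗ[ℂ] EuclideanSpace ℂ (Fin (2 ^ N))))
        = ⨅ k, (T k).comap (E : EuclideanSpace ℂ (Fin (2 ^ N)) →ₗ[ℂ] ((Fin N → Bool) → ℂ)) := by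
          simp only [hmc]
      _ = (⨅ k, T k).comap (E : EuclideanSpace ℂ (Fin (2 ^ N)) →ₗ[ℂ] ((Fin N → Bool) → ℂ)) :=
          (Submodule.comap_iInf _ _).symm
      _ = (Submodule.span ℂ {Pi.single z0 (1 : ℂ)}).comap
            (E : EuclideanSpace ℂ (Fin (2 ^ N)) →ₗ[ℂ] ((Fin N → Bool) → ℂ)) := by rw [hiInfT]
      _ = (Submodule.span ℂ {Pi.single z0 (1 : ℂ)}).map
            (E.symm : ((Fin N → Bool) → ℂ) →ₗ[ℂ] EuclideanSpace ℂ (Fin (2 ^ N))) := (hmc _).symm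
      _ = Submodule.span ℂ {E.symm (Pi.single z0 (1 : ℂ))} := by
          rw [Submodule.map_span, Set.image_singleton]; rfl
      _ = Submodule.span ℂ {ψ} := by rw [← hEψ, LinearEquiv.symm_apply_apply]
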